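/- arXiv:1310.1861 — 3 statements merged into one kernel-verified Lean document; each statement's English description precedes it below -/
import Mathlib

section
/- Let a ∈ ℝ^n have i.i.d. mean-zero Gaussian entries of variance k²/(2π), let x ∈ ℝ^n be fixed with ‖x‖ = P, let h ∈ ℝ^n have i.i.d. mean-zero Gaussian entries of variance (α/P)²/(2π) independent of a, and let e be a mean-zero Gaussian of variance α²/(2π) independent of a. Then ⟨a + h, x⟩ and ⟨a, x⟩ + e have the same distribution, namely a mean-zero Gaussian of variance ((kP)² + α²)/(2π). -/
open MeasureTheory ProbabilityTheory Real
open scoped ENNReal NNReal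

namespace StmtSixAux

lemma conv_pdf (v w : ℝ≥0) (hv : v ≠ 0) (hw : w ≠ 0) (z : ℝ) :
    ∫ t, gaussianPDFReal 0 v t * gaussianPDFReal 0 w (z - t)
      = gaussianPDFReal 0 (v + w) z := by
  have hA : 0 < (v : ℝ) := by exact_mod_cast zero_lt_iff.2 hv
  have hB : 0 < (w : ℝ) := by exact_mod_cast zero_lt_iff.2 hw
  set A := (v : ℝ)
  set B := (w : ℝ)
  have hAB : 0 < A + B := by positivity
  set b : ℝ := (A + B) / (2 * A * B) with hbdef
  have hb : 0 < b := by positivity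
  set m : ℝ := A * z / (A + B) with hmdef
  have key : ∀ t : ℝ, gaussianPDFReal 0 v t * gaussianPDFReal 0 w (z - t)
      = ((√(2 * π * A))⁻¹ * (√(2 * π * B))⁻¹ * rexp (-(z ^ 2) / (2 * (A + B))))
        * rexp (-b * (t - m) ^ 2) := by
    intro t
    have hexp : -(t - 0) ^ 2 / (2 * A) + -(z - t - 0) ^ 2 / (2 * B)
        = -(z ^ 2) / (2 * (A + B)) + -b * (t - m) ^ 2 := by
      rw [hbdef, hmdef]
      field_simp
      ring
    calc gaussianPDFReal 0 v t * gaussianPDFReal 0 w (z - t)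
        = (√(2 * π * A))⁻¹ * (√(2 * π * B))⁻¹
            * (rexp (-(t - 0) ^ 2 / (2 * A)) * rexp (-(z - t - 0) ^ 2 / (2 * B))) := by
          simp only [gaussianPDFReal]; ring
      _ = (√(2 * π * A))⁻¹ * (√(2 * π * B))⁻¹
            * (rexp (-(z ^ 2) / (2 * (A + B))) * rexp (-b * (t - m) ^ 2)) := by
          rw [← Real.exp_add, hexp, Real.exp_add]
      _ = _ := by ring
  rw [integral_congr_ae (Filter.Eventually.of_forall key), integral_const_mul]
  rw [integral_sub_right_eq_self (fun t => rexp (-b * t ^ 2)) m, integral_gaussian]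
  have hconst : (√(2 * π * A))⁻¹ * (√(2 * π * B))⁻¹ * √(π / b)
      = (√(2 * π * (A + B)))⁻¹ := by
    rw [← Real.sqrt_inv, ← Real.sqrt_inv, ← Real.sqrt_inv,
      ← Real.sqrt_mul (by positivity), ← Real.sqrt_mul (by positivity)]
    congr 1
    rw [hbdef]
    have hπ : (0:ℝ) < π := Real.pi_pos
    field_simp
  have hcoe : ((v + w : ℝ≥0) : ℝ) = A + B := by push_cast; rfl
  rw [gaussianPDFReal, hcoe, sub_zero]
  calc (√(2 * π * A))⁻¹ * (√(2 * π * B))⁻¹ * rexp (-(z ^ 2) / (2 * (A + B))) * √(π / b)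
      = ((√(2 * π * A))⁻¹ * (√(2 * π * B))⁻¹ * √(π / b)) * rexp (-(z ^ 2) / (2 * (A + B))) := by
        ring
    _ = (√(2 * π * (A + B)))⁻¹ * rexp (-z ^ 2 / (2 * (A + B))) := by rw [hconst]

lemma gaussian_conv (v w : ℝ≥0) :
    Measure.map (fun p : ℝ × ℝ => p.1 + p.2) ((gaussianReal 0 v).prod (gaussianReal 0 w))
      = gaussianReal 0 (v + w) := by
  by_cases hv : v = 0
  · subst hv
    rw [gaussianReal_zero_var, Measure.dirac_prod,
      Measure.map_map measurable_add measurable_prodMk_left]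
    have : ((fun p : ℝ × ℝ => p.1 + p.2) ∘ Prod.mk (0:ℝ)) = fun y : ℝ => (0:ℝ) + y := rfl
    rw [this, gaussianReal_map_const_add, zero_add, zero_add]
  by_cases hw : w = 0
  · subst hw
    rw [gaussianReal_zero_var, Measure.prod_dirac,
      Measure.map_map measurable_add measurable_prodMk_right]
    have : ((fun p : ℝ × ℝ => p.1 + p.2) ∘ (fun x : ℝ => (x, (0:ℝ)))) = fun y : ℝ => y + 0 := rfl
    rw [this, gaussianReal_map_add_const, add_zero, add_zero]
  -- main case
  have hvw : v + w ≠ 0 := fun h => hv (add_eq_zero.1 h).1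
  ext s hs
  rw [Measure.map_apply measurable_add hs, Measure.prod_apply (measurable_add hs)]
  have step1 : ∀ t : ℝ, gaussianReal 0 w (Prod.mk t ⁻¹' ((fun p : ℝ × ℝ => p.1 + p.2) ⁻¹' s))
      = ∫⁻ z, s.indicator (fun z => gaussianPDF 0 w (z - t)) z := by
    intro t
    have hpre : (Prod.mk t ⁻¹' ((fun p : ℝ × ℝ => p.1 + p.2) ⁻¹' s))
        = (fun y => t + y) ⁻¹' s := rfl
    rw [hpre, gaussianReal_of_var_ne_zero _ hw,
      withDensity_apply _ (hs.preimage (measurable_const_add t)),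
      ← lintegral_indicator (hs.preimage (measurable_const_add t))]
    have : ∀ y : ℝ, ((fun y => t + y) ⁻¹' s).indicator (gaussianPDF 0 w) y
        = s.indicator (fun z => gaussianPDF 0 w (z - t)) (t + y) := by
      intro y
      by_cases h : t + y ∈ s
      · simp [Set.indicator, h]
      · simp [Set.indicator, h]
    simp_rw [this]
    exact lintegral_add_left_eq_self (s.indicator (fun z => gaussianPDF 0 w (z - t))) t
  simp_rw [step1]
  rw [gaussianReal_of_var_ne_zero _ hv,
    lintegral_withDensity_eq_lintegral_mul _ (measurable_gaussianPDF 0 v)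
      (by
        apply Measurable.lintegral_prod_right' (f := fun p : ℝ × ℝ =>
          s.indicator (fun z => gaussianPDF 0 w (z - p.1)) p.2)
        apply Measurable.indicator
        · exact (measurable_gaussianPDF 0 w).comp (measurable_snd.sub measurable_fst)
        · exact hs.preimage measurable_snd)]
  have swap : ∫⁻ t, (gaussianPDF 0 v * fun t => ∫⁻ z, s.indicator
        (fun z => gaussianPDF 0 w (z - t)) z) t
      = ∫⁻ z, s.indicator (fun z => ∫⁻ t, gaussianPDF 0 v t * gaussianPDF 0 w (z - t)) z := by
    have hmeas : Measurable (fun p : ℝ × ℝ =>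
        s.indicator (fun z => gaussianPDF 0 v p.2 * gaussianPDF 0 w (z - p.2)) p.1) := by
      apply Measurable.indicator
      · exact ((measurable_gaussianPDF 0 v).comp measurable_snd).mul
          ((measurable_gaussianPDF 0 w).comp (measurable_fst.sub measurable_snd))
      · exact hs.preimage measurable_fst
    calc ∫⁻ t, (gaussianPDF 0 v * fun t => ∫⁻ z, s.indicator
          (fun z => gaussianPDF 0 w (z - t)) z) t
        = ∫⁻ t, ∫⁻ z, s.indicator
            (fun z => gaussianPDF 0 v t * gaussianPDF 0 w (z - t)) z := by
          refine lintegral_congr fun t => ?_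
          simp only [Pi.mul_apply]
          rw [← lintegral_const_mul _ (by
            exact Measurable.indicator ((measurable_gaussianPDF 0 w).comp
              (measurable_id.sub measurable_const)) hs)]
          refine lintegral_congr fun z => ?_
          by_cases h : z ∈ s <;> simp [Set.indicator, h]
      _ = ∫⁻ z, ∫⁻ t, s.indicator
            (fun z => gaussianPDF 0 v t * gaussianPDF 0 w (z - t)) z := by
          exact (lintegral_lintegral_swap hmeas.aemeasurable).symm
      _ = ∫⁻ z, s.indicator (fun z => ∫⁻ t, gaussianPDF 0 v t * gaussianPDF 0 w (z - t)) z := by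
          refine lintegral_congr fun z => ?_
          by_cases h : z ∈ s
          · simp only [Set.indicator_of_mem h]
          · simp [Set.indicator_of_notMem h]
  rw [swap]
  have inner : ∀ z : ℝ, (∫⁻ t, gaussianPDF 0 v t * gaussianPDF 0 w (z - t))
      = gaussianPDF 0 (v + w) z := by
    intro z
    have heq : ∀ t : ℝ, gaussianPDFReal 0 w (t - z) = gaussianPDFReal 0 w (z - t) := by
      intro t
      simp only [gaussianPDFReal]
      rw [show (t - z - 0) ^ 2 = (z - t - 0) ^ 2 by ring]
    have hint0 : Integrable (fun t => gaussianPDFReal 0 v t * gaussianPDFReal 0 w (t - z)) := by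
      refine Integrable.bdd_mul (c := (√(2 * π * v))⁻¹) ((integrable_gaussianPDFReal 0 w).comp_sub_right z)
        (measurable_gaussianPDFReal 0 v).aestronglyMeasurable ?_
      refine Filter.Eventually.of_forall (fun t => ?_)
      rw [Real.norm_eq_abs, abs_of_nonneg (gaussianPDFReal_nonneg _ _ _), gaussianPDFReal]
      have h1 : rexp (-(t - 0) ^ 2 / (2 * v)) ≤ 1 := by
        rw [Real.exp_le_one_iff]
        have hv' : (0:ℝ) < (v:ℝ) := by exact_mod_cast zero_lt_iff.2 hv
        apply div_nonpos_of_nonpos_of_nonneg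
        · simp [sq_nonneg]
        · positivity
      calc (√(2 * π * v))⁻¹ * rexp (-(t - 0) ^ 2 / (2 * v))
          ≤ (√(2 * π * v))⁻¹ * 1 := mul_le_mul_of_nonneg_left h1 (by positivity)
        _ = (√(2 * π * v))⁻¹ := mul_one _
    have hint : Integrable (fun t => gaussianPDFReal 0 v t * gaussianPDFReal 0 w (z - t)) := by
      refine hint0.congr (Filter.Eventually.of_forall fun t => ?_)
      simp only [heq]
    simp only [gaussianPDF]
    calc (∫⁻ t, ENNReal.ofReal (gaussianPDFReal 0 v t)
            * ENNReal.ofReal (gaussianPDFReal 0 w (z - t)))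
        = ∫⁻ t, ENNReal.ofReal (gaussianPDFReal 0 v t * gaussianPDFReal 0 w (z - t)) := by
          refine lintegral_congr fun t => ?_
          rw [ENNReal.ofReal_mul (gaussianPDFReal_nonneg _ _ _)]
      _ = ENNReal.ofReal (∫ t, gaussianPDFReal 0 v t * gaussianPDFReal 0 w (z - t)) := by
          rw [← ofReal_integral_eq_lintegral_ofReal hint
            (Filter.Eventually.of_forall fun t =>
              mul_nonneg (gaussianPDFReal_nonneg _ _ _) (gaussianPDFReal_nonneg _ _ _))]
      _ = ENNReal.ofReal (gaussianPDFReal 0 (v + w) z) := by rw [conv_pdf v w hv hw z]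
  simp_rw [inner]
  rw [lintegral_indicator hs, gaussianReal_apply _ hvw]

lemma map_add_prod {X Y : Type*} [MeasurableSpace X] [MeasurableSpace Y]
    (μ : Measure X) (ν : Measure Y) [SFinite μ] [SFinite ν]
    {f : X → ℝ} {g : Y → ℝ} (hf : Measurable f) (hg : Measurable g)
    {v w : ℝ≥0} (h1 : μ.map f = gaussianReal 0 v) (h2 : ν.map g = gaussianReal 0 w) :
    (μ.prod ν).map (fun p => f p.1 + g p.2) = gaussianReal 0 (v + w) := by
  have hcomp : (fun p : X × Y => f p.1 + g p.2)
      = (fun p : ℝ × ℝ => p.1 + p.2) ∘ (Prod.map f g) := rfl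
  rw [hcomp, ← Measure.map_map measurable_add (hf.prodMap hg),
    ← Measure.map_prod_map _ _ hf hg, h1, h2, gaussian_conv]

lemma map_sum : ∀ (n : ℕ) (c : Fin n → ℝ) (v : ℝ≥0),
    Measure.map (fun a : Fin n → ℝ => ∑ i, a i * c i)
        (Measure.pi fun _ : Fin n => gaussianReal 0 v)
      = gaussianReal 0 ((NNReal.mk (∑ i, (c i) ^ 2) (Finset.sum_nonneg fun i _ => sq_nonneg _)) * v) := by
  intro n
  induction n with
  | zero =>
    intro c v
    simp only [Finset.univ_eq_empty, Finset.sum_empty]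
    have h0 : (NNReal.mk (0:ℝ) (le_refl 0) * v : ℝ≥0) = 0 := by
      ext; simp
    rw [h0, gaussianReal_zero_var]
    have : (fun _ : Fin 0 → ℝ => (0:ℝ)) = fun _ => (0:ℝ) := rfl
    rw [Measure.map_const]
    simp
  | succ n ih =>
    intro c v
    have hmp := measurePreserving_piFinSuccAbove (fun _ : Fin (n + 1) => gaussianReal 0 v) 0
    have hfun : (fun a : Fin (n + 1) → ℝ => ∑ i, a i * c i)
        = (fun p : ℝ × (Fin n → ℝ) => p.1 * c 0 + ∑ j, p.2 j * c (Fin.succAbove 0 j))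
          ∘ (MeasurableEquiv.piFinSuccAbove (fun _ => ℝ) 0) := by
      funext a
      simp only [Function.comp_apply, MeasurableEquiv.piFinSuccAbove_apply]
      rw [Fin.sum_univ_succAbove (fun i => a i * c i) 0]
      simp [Fin.removeNth, Fin.tail, Fin.succAbove_zero]
    rw [hfun, ← Measure.map_map (by fun_prop)
      (MeasurableEquiv.piFinSuccAbove (fun _ => ℝ) 0).measurable, hmp.map_eq]
    have h1 : (gaussianReal 0 v).map (fun t : ℝ => t * c 0)
        = gaussianReal 0 (NNReal.mk ((c 0) ^ 2) (sq_nonneg _) * v) := by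
      rw [gaussianReal_map_mul_const (c 0), mul_zero]
    have h2 := ih (fun j => c (Fin.succAbove 0 j)) v
    refine (map_add_prod _ _ (f := fun t : ℝ => t * c 0)
      (g := fun a : Fin n → ℝ => ∑ j, a j * c (Fin.succAbove 0 j))
      (by fun_prop) (by fun_prop) h1 h2).trans ?_
    congr 1
    rw [← NNReal.coe_inj]
    simp only [NNReal.coe_add, NNReal.coe_mul, NNReal.coe_mk]
    rw [Fin.sum_univ_succAbove (fun i => (c i) ^ 2) 0]
    ring

lemma sfinite_pi (n : ℕ) (v : ℝ≥0) :
    SFinite (Measure.pi fun _ : Fin n => gaussianReal 0 v) := inferInstance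

lemma sfinite_g (v : ℝ≥0) : SFinite (gaussianReal 0 v) := inferInstance

end StmtSixAux

/-- With `a ~ Ψ_k^n`, `h ~ Ψ_{α/P}^n`, `e ~ Ψ_α` independent and `‖x‖ = P`,
the random variables `⟨a + h, x⟩` and `⟨a, x⟩ + e` have the same distribution,
namely the mean-zero Gaussian of variance `((kP)² + α²)/(2π)`. -/
theorem stmt_6 {n : ℕ} (k α P : ℝ) (hk : 0 < k) (hα : 0 < α) (hP : 0 < P)
    (x : Fin n → ℝ) (hx : Real.sqrt (∑ i, x i ^ 2) = P) :
    Measure.map (fun p : (Fin n → ℝ) × (Fin n → ℝ) => ∑ i, (p.1 i + p.2 i) * x i)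
        ((Measure.pi fun _ : Fin n =>
            gaussianReal 0 ⟨k ^ 2 / (2 * Real.pi), by positivity⟩).prod
          (Measure.pi fun _ : Fin n =>
            gaussianReal 0 ⟨(α / P) ^ 2 / (2 * Real.pi), by positivity⟩))
      = gaussianReal 0 ⟨((k * P) ^ 2 + α ^ 2) / (2 * Real.pi), by positivity⟩ ∧
    Measure.map (fun p : (Fin n → ℝ) × ℝ => (∑ i, p.1 i * x i) + p.2)
        ((Measure.pi fun _ : Fin n =>
            gaussianReal 0 ⟨k ^ 2 / (2 * Real.pi), by positivity⟩).prod
          (gaussianReal 0 ⟨α ^ 2 / (2 * Real.pi), by positivity⟩))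
      = gaussianReal 0 ⟨((k * P) ^ 2 + α ^ 2) / (2 * Real.pi), by positivity⟩ := by
  have hS : ∑ i, x i ^ 2 = P ^ 2 := by
    have h0 : 0 ≤ ∑ i, x i ^ 2 := Finset.sum_nonneg fun i _ => sq_nonneg _
    rw [← hx, Real.sq_sqrt h0]
  have hπ : (0:ℝ) < Real.pi := Real.pi_pos
  constructor
  · have h1 := StmtSixAux.map_sum n x ⟨k ^ 2 / (2 * Real.pi), by positivity⟩
    have h2 := StmtSixAux.map_sum n x ⟨(α / P) ^ 2 / (2 * Real.pi), by positivity⟩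
    have hfun : (fun p : (Fin n → ℝ) × (Fin n → ℝ) => ∑ i, (p.1 i + p.2 i) * x i)
        = fun p => (∑ i, p.1 i * x i) + (∑ i, p.2 i * x i) := by
      funext p
      rw [← Finset.sum_add_distrib]
      exact Finset.sum_congr rfl fun i _ => by ring
    rw [hfun]
    haveI : SFinite (Measure.pi fun _ : Fin n =>
        gaussianReal 0 ⟨k ^ 2 / (2 * Real.pi), by positivity⟩) := StmtSixAux.sfinite_pi n _
    haveI : SFinite (Measure.pi fun _ : Fin n =>
        gaussianReal 0 ⟨(α / P) ^ 2 / (2 * Real.pi), by positivity⟩) := StmtSixAux.sfinite_pi n _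
    refine (StmtSixAux.map_add_prod _ _
      (f := fun a : Fin n → ℝ => ∑ i, a i * x i)
      (g := fun a : Fin n → ℝ => ∑ i, a i * x i)
      (by fun_prop) (by fun_prop) h1 h2).trans ?_
    congr 1
    apply NNReal.eq
    show (∑ i, x i ^ 2) * (k ^ 2 / (2 * Real.pi)) + (∑ i, x i ^ 2) * ((α / P) ^ 2 / (2 * Real.pi))
      = ((k * P) ^ 2 + α ^ 2) / (2 * Real.pi)
    rw [hS]
    field_simp
  · have h1 := StmtSixAux.map_sum n x ⟨k ^ 2 / (2 * Real.pi), by positivity⟩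
    have h2 : Measure.map (fun t : ℝ => t)
        (gaussianReal 0 ⟨α ^ 2 / (2 * Real.pi), by positivity⟩)
        = gaussianReal 0 ⟨α ^ 2 / (2 * Real.pi), by positivity⟩ := Measure.map_id
    haveI : SFinite (Measure.pi fun _ : Fin n =>
        gaussianReal 0 ⟨k ^ 2 / (2 * Real.pi), by positivity⟩) := StmtSixAux.sfinite_pi n _
    haveI : SFinite (gaussianReal 0 ⟨α ^ 2 / (2 * Real.pi), by positivity⟩) :=
      StmtSixAux.sfinite_g _
    refine (StmtSixAux.map_add_prod _ _
      (f := fun a : Fin n → ℝ => ∑ i, a i * x i)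
      (g := fun t : ℝ => t)
      (by fun_prop) (by fun_prop) h1 h2).trans ?_
    congr 1
    apply NNReal.eq
    show (∑ i, x i ^ 2) * (k ^ 2 / (2 * Real.pi)) + α ^ 2 / (2 * Real.pi)
      = ((k * P) ^ 2 + α ^ 2) / (2 * Real.pi)
    rw [hS]
    ring
end

section
/- For any 0 < β < α ≤ 2β, the total variational distance between the mean-zero Gaussian distributions with standard deviations α/√(2π) and β/√(2π) satisfies Δ(Ψ_α, Ψ_β) ≤ 9(α/β − 1). -/
open MeasureTheory

lemma gauss_int (s : ℝ) (hs : 0 < s) :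
    ∫ x : ℝ, Real.exp (-(Real.pi / s ^ 2) * x ^ 2) = s := by
  rw [integral_gaussian]
  have h : Real.pi / (Real.pi / s ^ 2) = s ^ 2 := by
    field_simp
  rw [h, Real.sqrt_sq hs.le]

lemma gauss_integrable (s : ℝ) (hs : 0 < s) :
    Integrable (fun x : ℝ => Real.exp (-(Real.pi / s ^ 2) * x ^ 2)) := by
  exact integrable_exp_neg_mul_sq (by positivity)

/-- For `0 < β < α ≤ 2β`, the total variational distance between the mean-zero
Gaussians with standard deviations `α/√(2π)` and `β/√(2π)` (whose densities are
`x ↦ (1/s)·exp(−πx²/s²)`) satisfies `Δ(Ψ_α, Ψ_β) ≤ 9(α/β − 1)`. -/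
theorem stmt_7 (α β : ℝ) (hβ : 0 < β) (hβα : β < α) (hα2β : α ≤ 2 * β) :
    (1 / 2) * ∫ x : ℝ,
        |(1 / α) * Real.exp (-Real.pi * x ^ 2 / α ^ 2) -
          (1 / β) * Real.exp (-Real.pi * x ^ 2 / β ^ 2)|
      ≤ 9 * (α / β - 1) := by
  have hα : 0 < α := hβ.trans hβα
  have hrw : ∀ s : ℝ, s ≠ 0 → ∀ x : ℝ,
      -Real.pi * x ^ 2 / s ^ 2 = -(Real.pi / s ^ 2) * x ^ 2 := by
    intro s hs x; field_simp
  have hia := gauss_integrable α hα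
  have hib := gauss_integrable β hβ
  set f : ℝ → ℝ := fun x => Real.exp (-(Real.pi / α ^ 2) * x ^ 2) with hf
  set g : ℝ → ℝ := fun x => Real.exp (-(Real.pi / β ^ 2) * x ^ 2) with hg
  have hsub : Integrable (fun x : ℝ => f x - g x) := hia.sub hib
  have hle : ∀ x : ℝ, g x ≤ f x := by
    intro x
    apply Real.exp_le_exp.2
    have : Real.pi / α ^ 2 ≤ Real.pi / β ^ 2 := by
      apply div_le_div_of_nonneg_left Real.pi_pos.le (by positivity)
      nlinarith
    nlinarith [sq_nonneg x]
  have hint : Integrable (fun x : ℝ =>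
      |(1 / α) * Real.exp (-Real.pi * x ^ 2 / α ^ 2) -
        (1 / β) * Real.exp (-Real.pi * x ^ 2 / β ^ 2)|) := by
    apply Integrable.abs
    have : (fun x : ℝ => (1 / α) * Real.exp (-Real.pi * x ^ 2 / α ^ 2) -
        (1 / β) * Real.exp (-Real.pi * x ^ 2 / β ^ 2)) =
        fun x => (1 / α) * f x - (1 / β) * g x := by
      funext x; rw [hrw α hα.ne', hrw β hβ.ne']
    rw [this]
    exact ((hia.const_mul _).sub (hib.const_mul _))
  have hbound : ∫ x : ℝ,
        |(1 / α) * Real.exp (-Real.pi * x ^ 2 / α ^ 2) -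
          (1 / β) * Real.exp (-Real.pi * x ^ 2 / β ^ 2)|
      ≤ ∫ x : ℝ, ((1 / β - 1 / α) * f x + (1 / β) * (f x - g x)) := by
    apply integral_mono hint
    · exact (((hia.const_mul _)).add (hsub.const_mul _))
    · intro x
      simp only [hrw α hα.ne', hrw β hβ.ne']
      have h1 : (1:ℝ)/α ≤ 1/β := by
        apply one_div_le_one_div_of_le hβ hβα.le
      have h2 := hle x
      have h3 : 0 < f x := Real.exp_pos _
      have h4 : 0 < g x := Real.exp_pos _
      have e1 : Real.exp (-(Real.pi / α ^ 2) * x ^ 2) = f x := rfl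
      have e2 : Real.exp (-(Real.pi / β ^ 2) * x ^ 2) = g x := rfl
      rw [e1, e2, abs_sub_le_iff]
      constructor <;>
        nlinarith [mul_nonneg (one_div_pos.2 hβ).le (sub_nonneg.2 h2),
          mul_nonneg (sub_nonneg.2 h1) h3.le]
  have hIf : ∫ x : ℝ, f x = α := gauss_int α hα
  have hIg : ∫ x : ℝ, g x = β := gauss_int β hβ
  have hval : ∫ x : ℝ, ((1 / β - 1 / α) * f x + (1 / β) * (f x - g x))
      = (1 / β - 1 / α) * α + (1 / β) * (α - β) := by
    rw [integral_add ((hia.const_mul _)) ((hsub.const_mul _)),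
      integral_const_mul, integral_const_mul, integral_sub hia hib, hIf, hIg]
  have hfin : (1 / β - 1 / α) * α + (1 / β) * (α - β) ≤ 2 * (α / β - 1) := by
    field_simp
    nlinarith
  have h9 : 0 ≤ α / β - 1 := by
    rw [sub_nonneg, le_div_iff₀ hβ]; linarith
  nlinarith [hbound, hval, hfin]
end

section
/- For any n-dimensional full-rank lattice L, the smoothing parameter satisfies η_ε(L) ≤ √n / λ₁(L*) where ε = 2^{-n}; that is, if s ≥ √n / λ₁(L*) then Σ_{y ∈ L* \ {0}} exp(−π s² ‖y‖²) ≤ 2^{-n}. -/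
open Matrix Metric MeasureTheory
open scoped ENNReal

private lemma my_packing {n : ℕ} (hn : 0 < n) {α : Type*} (S : Finset α)
    (p : α → EuclideanSpace ℝ (Fin n)) {lam R : ℝ} (hl : 0 < lam) (hR : 0 ≤ R)
    (hsep : ∀ a ∈ S, ∀ b ∈ S, a ≠ b → lam ≤ dist (p a) (p b))
    (hball : ∀ a ∈ S, ‖p a‖ ≤ R) :
    (S.card : ℝ) ≤ (2 * R / lam + 1) ^ n := by
  classical
  set r := lam / 2 with hrdef
  have hr : 0 < r := by positivity
  have hdisj : (↑S : Set α).PairwiseDisjoint (fun a => Metric.ball (p a) r) := by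
    intro a ha b hb hab
    exact Metric.ball_disjoint_ball (by
      have := hsep a ha b hb hab; rw [hrdef]; linarith)
  have hU : (⋃ a ∈ S, Metric.ball (p a) r)
      ⊆ Metric.ball (0 : EuclideanSpace ℝ (Fin n)) (R + r) := by
    intro x hx
    simp only [Set.mem_iUnion, Metric.mem_ball] at hx ⊢
    obtain ⟨a, ha, hxa⟩ := hx
    have h1 : dist x 0 ≤ dist x (p a) + dist (p a) 0 := dist_triangle _ _ _
    have h2 : dist (p a) 0 = ‖p a‖ := by simp
    have := hball a ha
    linarith
  have hvol := measure_biUnion_finset (μ := volume) hdisj (fun a _ => measurableSet_ball)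
  have hballvol : ∀ a : α, volume (Metric.ball (p a) r)
      = ENNReal.ofReal (r ^ n) * volume (Metric.ball (0 : EuclideanSpace ℝ (Fin n)) 1) := by
    intro a
    rw [Measure.addHaar_ball_of_pos volume (p a) hr, finrank_euclideanSpace_fin]
  have hRr : volume (Metric.ball (0 : EuclideanSpace ℝ (Fin n)) (R + r))
      = ENNReal.ofReal ((R + r) ^ n) * volume (Metric.ball (0 : EuclideanSpace ℝ (Fin n)) 1) := by
    rw [Measure.addHaar_ball_of_pos volume _ (by linarith : (0:ℝ) < R + r),
      finrank_euclideanSpace_fin]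
  have hkey : ((S.card : ℝ≥0∞) * ENNReal.ofReal (r ^ n))
        * volume (Metric.ball (0 : EuclideanSpace ℝ (Fin n)) 1)
      ≤ ENNReal.ofReal ((R + r) ^ n) * volume (Metric.ball (0 : EuclideanSpace ℝ (Fin n)) 1) := by
    calc ((S.card : ℝ≥0∞) * ENNReal.ofReal (r ^ n))
          * volume (Metric.ball (0 : EuclideanSpace ℝ (Fin n)) 1)
        = ∑ a ∈ S, volume (Metric.ball (p a) r) := by
          simp [hballvol, Finset.sum_const, mul_assoc]
      _ = volume (⋃ a ∈ S, Metric.ball (p a) r) := hvol.symm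
      _ ≤ volume (Metric.ball (0 : EuclideanSpace ℝ (Fin n)) (R + r)) := measure_mono hU
      _ = _ := hRr
  have hv1pos : volume (Metric.ball (0 : EuclideanSpace ℝ (Fin n)) 1) ≠ 0 :=
    (measure_ball_pos volume 0 one_pos).ne'
  have hv1top : volume (Metric.ball (0 : EuclideanSpace ℝ (Fin n)) 1) ≠ ⊤ :=
    measure_ball_lt_top.ne
  have hkey2 : (S.card : ℝ≥0∞) * ENNReal.ofReal (r ^ n) ≤ ENNReal.ofReal ((R + r) ^ n) :=
    (ENNReal.mul_le_mul_iff_left hv1pos hv1top).mp hkey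
  have hreal : (S.card : ℝ) * r ^ n ≤ (R + r) ^ n := by
    have : ENNReal.ofReal ((S.card : ℝ) * r ^ n) ≤ ENNReal.ofReal ((R + r) ^ n) := by
      rwa [ENNReal.ofReal_mul (by positivity), ENNReal.ofReal_natCast]
    exact (ENNReal.ofReal_le_ofReal_iff (by positivity)).mp this
  have hrpow : (0:ℝ) < r ^ n := by positivity
  have := (le_div_iff₀ hrpow).mpr hreal
  calc (S.card : ℝ) ≤ (R + r) ^ n / r ^ n := this
    _ = ((R + r) / r) ^ n := (div_pow _ _ _).symm
    _ = (2 * R / lam + 1) ^ n := by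
        congr 1
        rw [hrdef]
        field_simp

private lemma my_k_bound : ∀ k : ℕ, 1 ≤ k → (k : ℝ) ≤ (20 / 9 : ℝ) ^ (k - 1) := by
  intro k hk
  induction k, hk using Nat.le_induction with
  | base => simp
  | succ k hk ih =>
    have h1 : (1 : ℝ) ≤ (k : ℝ) := by exact_mod_cast hk
    have hstep : ((k : ℝ) + 1) ≤ (20 / 9) * (k : ℝ) := by nlinarith
    have : (20 / 9 : ℝ) ^ (k + 1 - 1) = (20 / 9) * (20 / 9) ^ (k - 1) := by
      rw [Nat.add_sub_cancel]
      conv_lhs => rw [← Nat.succ_pred_eq_of_pos hk]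
      rw [pow_succ, mul_comm]
      rfl
    rw [this]
    push_cast
    nlinarith

private lemma my_exp3 : Real.exp (-3) ≤ 1 / 20 := by
  have h3 : Real.exp 3 = Real.exp 1 * Real.exp 1 * Real.exp 1 := by
    rw [← Real.exp_add, ← Real.exp_add]; norm_num
  have h20 : (20 : ℝ) < Real.exp 3 := by
    have := Real.exp_one_gt_d9
    nlinarith
  rw [Real.exp_neg]
  rw [inv_le_comm₀ (Real.exp_pos 3) (by norm_num)] at *
  · linarith

set_option maxHeartbeats 1000000 in
/-- Smoothing parameter bound (Micciancio–Regev): for an `n`-dimensional full-rank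
lattice `L(A)` with dual `L((Aᵀ)⁻¹)`, if `λ₁` is a positive lower bound on the norms
of nonzero dual vectors and `s ≥ √n / λ₁`, then the dual Gaussian mass
`Σ_{y ∈ L* \ {0}} exp(−π s² ‖y‖²)` is at most `2^{-n}`. -/
theorem stmt_8 {n : ℕ} (hn : 0 < n) (A : Matrix (Fin n) (Fin n) ℝ) (hA : IsUnit A.det)
    (lam1 : ℝ) (hpos : 0 < lam1)
    (hlam : ∀ z : Fin n → ℤ, z ≠ 0 →
      lam1 ≤ Real.sqrt (∑ i, ((Aᵀ)⁻¹.mulVec (fun j => (z j : ℝ))) i ^ 2))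
    (s : ℝ) (hs : Real.sqrt n / lam1 ≤ s) :
    ∑' z : {z : Fin n → ℤ // z ≠ 0},
        Real.exp (-Real.pi * s ^ 2 *
          ∑ i, ((Aᵀ)⁻¹.mulVec (fun j => (z.1 j : ℝ))) i ^ 2)
      ≤ 2 ^ (-(n : ℝ)) := by
  classical
  set F : (Fin n → ℤ) → EuclideanSpace ℝ (Fin n) :=
    fun z => (WithLp.equiv 2 (Fin n → ℝ)).symm ((Aᵀ)⁻¹.mulVec (fun j => (z j : ℝ))) with hF
  have hFnorm : ∀ z : Fin n → ℤ,
      ‖F z‖ = Real.sqrt (∑ i, ((Aᵀ)⁻¹.mulVec (fun j => (z j : ℝ))) i ^ 2) := by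
    intro z
    rw [EuclideanSpace.norm_eq]
    congr 1
    refine Finset.sum_congr rfl fun i _ => ?_
    simp only [hF, WithLp.equiv_symm_apply, PiLp.toLp_apply, Real.norm_eq_abs, sq_abs]
  have hQ : ∀ z : Fin n → ℤ,
      (∑ i, ((Aᵀ)⁻¹.mulVec (fun j => (z j : ℝ))) i ^ 2) = ‖F z‖ ^ 2 := by
    intro z
    rw [hFnorm, Real.sq_sqrt]
    positivity
  have hFsub : ∀ z z' : Fin n → ℤ, F z - F z' = F (z - z') := by
    intro z z'
    have hcast : (fun j => ((z - z') j : ℝ))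
        = (fun j => (z j : ℝ)) - fun j => (z' j : ℝ) := by
      funext j; simp
    rw [hF]
    simp only [hcast, Matrix.mulVec_sub, WithLp.equiv_symm_apply, WithLp.toLp_sub]
  have hlow : ∀ z : Fin n → ℤ, z ≠ 0 → lam1 ≤ ‖F z‖ := by
    intro z hz; rw [hFnorm]; exact hlam z hz
  have hsep : ∀ z z' : Fin n → ℤ, z ≠ z' → lam1 ≤ dist (F z) (F z') := by
    intro z z' hzz
    rw [dist_eq_norm, hFsub]
    exact hlow _ (sub_ne_zero.mpr hzz)
  have hsqrtn : (0:ℝ) < Real.sqrt n := Real.sqrt_pos.mpr (by exact_mod_cast hn)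
  have hs0 : 0 < s := lt_of_lt_of_le (by positivity) hs
  have hs2 : (n : ℝ) / lam1 ^ 2 ≤ s ^ 2 := by
    have h2 : (0:ℝ) ≤ Real.sqrt n / lam1 := by positivity
    have := pow_le_pow_left₀ h2 hs 2
    rwa [div_pow, Real.sq_sqrt (by positivity : (0:ℝ) ≤ (n:ℝ))] at this
  -- reduce to finite sums
  refine tsum_le_of_sum_le' (by positivity) fun S => ?_
  -- annulus index
  set K : {z : Fin n → ℤ // z ≠ 0} → ℕ := fun a => ⌊‖F a.1‖ / lam1⌋₊ with hKdef
  have hK1 : ∀ a : {z : Fin n → ℤ // z ≠ 0}, 1 ≤ K a := by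
    intro a
    rw [hKdef]
    rw [Nat.one_le_floor_iff]
    rw [le_div_iff₀ hpos, one_mul]
    exact hlow a.1 a.2
  have hKle : ∀ a : {z : Fin n → ℤ // z ≠ 0}, (K a : ℝ) * lam1 ≤ ‖F a.1‖ := by
    intro a
    have := Nat.floor_le (by positivity : (0:ℝ) ≤ ‖F a.1‖ / lam1)
    rw [← le_div_iff₀ hpos]
    exact this
  have hKlt : ∀ a : {z : Fin n → ℤ // z ≠ 0}, ‖F a.1‖ ≤ ((K a : ℝ) + 1) * lam1 := by
    intro a
    have := (Nat.lt_floor_add_one (‖F a.1‖ / lam1)).le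
    rw [div_le_iff₀ hpos] at this
    exact this
  -- per-term bound
  have hterm : ∀ a : {z : Fin n → ℤ // z ≠ 0},
      Real.exp (-Real.pi * s ^ 2 * ∑ i, ((Aᵀ)⁻¹.mulVec (fun j => (a.1 j : ℝ))) i ^ 2)
        ≤ Real.exp (-Real.pi * (K a : ℝ) ^ 2) ^ n := by
    intro a
    have hQa : ((K a : ℝ) * lam1) ^ 2 ≤ ‖F a.1‖ ^ 2 :=
      pow_le_pow_left₀ (by positivity) (hKle a) 2
    have hnk : (n : ℝ) * (K a : ℝ) ^ 2 ≤ s ^ 2 * ‖F a.1‖ ^ 2 := by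
      have hmul : ((n:ℝ) / lam1 ^ 2) * (((K a : ℝ) * lam1) ^ 2) ≤ s ^ 2 * ‖F a.1‖ ^ 2 :=
        mul_le_mul hs2 hQa (by positivity) (by positivity)
      have heq : ((n:ℝ) / lam1 ^ 2) * (((K a : ℝ) * lam1) ^ 2) = (n:ℝ) * (K a : ℝ) ^ 2 := by
        field_simp
      linarith [heq ▸ hmul]
    rw [← Real.exp_nat_mul, Real.exp_le_exp, hQ a.1]
    have hpi := Real.pi_pos
    nlinarith
  calc ∑ a ∈ S, Real.exp (-Real.pi * s ^ 2 *
          ∑ i, ((Aᵀ)⁻¹.mulVec (fun j => (a.1 j : ℝ))) i ^ 2)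
      ≤ ∑ a ∈ S, Real.exp (-Real.pi * (K a : ℝ) ^ 2) ^ n :=
        Finset.sum_le_sum fun a _ => hterm a
    _ = ∑ k ∈ S.image K, (S.filter fun a => K a = k).card
          • Real.exp (-Real.pi * (k : ℝ) ^ 2) ^ n :=
        Finset.sum_comp (fun k : ℕ => Real.exp (-Real.pi * (k:ℝ) ^ 2) ^ n) K
    _ ≤ ∑ k ∈ S.image K, (3/10 : ℝ) ^ n * (1/9 : ℝ) ^ (k - 1) := by
        refine Finset.sum_le_sum fun k hk => ?_
        obtain ⟨a0, _, hKa0⟩ := Finset.mem_image.mp hk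
        have hk1 : 1 ≤ k := hKa0 ▸ hK1 a0
        have hk1R : (1:ℝ) ≤ (k:ℝ) := by exact_mod_cast hk1
        -- counting via packing
        have hcount : (((S.filter fun a => K a = k).card : ℝ)) ≤ (6 * (k:ℝ)) ^ n := by
          have hpack := my_packing hn (S.filter fun a => K a = k) (fun a => F a.1)
            hpos (by positivity : (0:ℝ) ≤ ((k:ℝ) + 1) * lam1)
            (fun a _ b _ hab => hsep a.1 b.1 (fun h => hab (Subtype.ext h)))
            (fun a ha => by
              have := hKlt a
              rw [(Finset.mem_filter.mp ha).2] at this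
              exact this)
          refine hpack.trans ?_
          have heq : 2 * (((k:ℝ) + 1) * lam1) / lam1 + 1 = 2 * (k:ℝ) + 3 := by
            field_simp
            ring
          rw [heq]
          exact pow_le_pow_left₀ (by linarith) (by linarith) n
        have hexp : Real.exp (-Real.pi * (k : ℝ) ^ 2) ≤ (1/20 : ℝ) ^ k := by
          have h1 : Real.exp (-Real.pi * (k : ℝ) ^ 2) ≤ Real.exp ((k:ℝ) * (-3)) := by
            rw [Real.exp_le_exp]
            have hpi3 := Real.pi_gt_three
            nlinarith
          have h2 : Real.exp ((k:ℝ) * (-3)) = Real.exp (-3) ^ k := Real.exp_nat_mul _ k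
          calc Real.exp (-Real.pi * (k : ℝ) ^ 2) ≤ Real.exp (-3) ^ k := h2 ▸ h1
            _ ≤ (1/20 : ℝ) ^ k := pow_le_pow_left₀ (Real.exp_pos _).le my_exp3 k
        have hbase : 6 * (k:ℝ) * (1/20 : ℝ) ^ k ≤ (3/10 : ℝ) * (1/9 : ℝ) ^ (k - 1) := by
          have hpk : (1/20 : ℝ) ^ k = (1/20) * (1/20) ^ (k - 1) := by
            conv_lhs => rw [← Nat.succ_pred_eq_of_pos hk1]
            rw [pow_succ, mul_comm]
            rfl
          have hkb := my_k_bound k hk1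
          have : (k:ℝ) * (1/20 : ℝ) ^ (k-1) ≤ (1/9 : ℝ) ^ (k-1) := by
            calc (k:ℝ) * (1/20 : ℝ) ^ (k-1)
                ≤ (20/9 : ℝ) ^ (k-1) * (1/20 : ℝ) ^ (k-1) :=
                  mul_le_mul_of_nonneg_right hkb (by positivity)
              _ = (1/9 : ℝ) ^ (k-1) := by
                  rw [← mul_pow]
                  norm_num
          rw [hpk]
          nlinarith [pow_nonneg (by norm_num : (0:ℝ) ≤ 1/20) (k-1)]
        calc ((S.filter fun a => K a = k).card : ℕ)
              • Real.exp (-Real.pi * (k : ℝ) ^ 2) ^ n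
            = ((S.filter fun a => K a = k).card : ℝ)
              * Real.exp (-Real.pi * (k : ℝ) ^ 2) ^ n := nsmul_eq_mul _ _
          _ ≤ (6 * (k:ℝ)) ^ n * Real.exp (-Real.pi * (k : ℝ) ^ 2) ^ n := by
              exact mul_le_mul_of_nonneg_right hcount (by positivity)
          _ = (6 * (k:ℝ) * Real.exp (-Real.pi * (k : ℝ) ^ 2)) ^ n := (mul_pow _ _ _).symm
          _ ≤ ((3/10 : ℝ) * (1/9 : ℝ) ^ (k - 1)) ^ n := by
              refine pow_le_pow_left₀ (by positivity) ?_ n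
              exact le_trans (mul_le_mul_of_nonneg_left hexp (by positivity)) hbase
          _ = (3/10 : ℝ) ^ n * ((1/9 : ℝ) ^ (k - 1)) ^ n := mul_pow _ _ _
          _ ≤ (3/10 : ℝ) ^ n * (1/9 : ℝ) ^ (k - 1) := by
              refine mul_le_mul_of_nonneg_left ?_ (by positivity)
              exact pow_le_of_le_one (by positivity)
                (pow_le_one₀ (by norm_num) (by norm_num)) hn.ne'
    _ = (3/10 : ℝ) ^ n * ∑ k ∈ S.image K, (1/9 : ℝ) ^ (k - 1) := by
        rw [Finset.mul_sum]
    _ ≤ (3/10 : ℝ) ^ n * (9/8 : ℝ) := by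
        refine mul_le_mul_of_nonneg_left ?_ (by positivity)
        have hinj : ∀ x ∈ S.image K, ∀ y ∈ S.image K, x - 1 = y - 1 → x = y := by
          intro x hx y hy hxy
          obtain ⟨a, _, ha⟩ := Finset.mem_image.mp hx
          obtain ⟨b, _, hb⟩ := Finset.mem_image.mp hy
          have hx1 : 1 ≤ x := ha ▸ hK1 a
          have hy1 : 1 ≤ y := hb ▸ hK1 b
          omega
        have hre : ∑ k ∈ S.image K, (1/9 : ℝ) ^ (k - 1)
            = ∑ j ∈ (S.image K).image (fun k => k - 1), (1/9 : ℝ) ^ j :=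
          (Finset.sum_image hinj).symm
        rw [hre]
        have hsum : ∑ j ∈ (S.image K).image (fun k => k - 1), (1/9 : ℝ) ^ j
            ≤ ∑' j : ℕ, (1/9 : ℝ) ^ j :=
          Summable.sum_le_tsum _ (fun i _ => by positivity)
            (summable_geometric_of_lt_one (by norm_num) (by norm_num))
        rw [tsum_geometric_of_lt_one (by norm_num) (by norm_num)] at hsum
        refine hsum.trans ?_
        norm_num
    _ ≤ 2 ^ (-(n : ℝ)) := by
        have h2n : (2:ℝ) ^ (-(n : ℝ)) = (1/2 : ℝ) ^ n := by
          rw [Real.rpow_neg (by norm_num), Real.rpow_natCast, one_div, inv_pow]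
        rw [h2n]
        have h35 : (3/10 : ℝ) ^ n = (3/5 : ℝ) ^ n * (1/2 : ℝ) ^ n := by
          rw [← mul_pow]; norm_num
        rw [h35]
        have h1 : (3/5 : ℝ) ^ n ≤ 3/5 :=
          pow_le_of_le_one (by norm_num) (by norm_num) hn.ne'
        nlinarith [pow_nonneg (by norm_num : (0:ℝ) ≤ 1/2) n,
          pow_nonneg (by norm_num : (0:ℝ) ≤ 3/5) n]
end
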